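/- For every m ≥ 3 there exists a 3-way (v,3,1) Steiner trade of volume m that is 1-solely balanced, i.e., no two of the three collections contain a common pair of elements. -/
import Mathlib


/-- The blocks of a collection `Ti` that contain a given subset `S`. -/
def blocksContaining (Ti : Finset (Finset ℕ)) (S : Finset ℕ) : Finset (Finset ℕ) :=
  Ti.filter (fun B => S ⊆ B)

/-- `T` is a μ-way (v,k,t) trade of volume `m` with point set `V`:
μ pairwise disjoint collections, each of `m` k-subsets of the v-set `V`,
such that every t-subset of `V` is contained in the same number of blocks
of each collection. -/
structure IsTrade (μ v k t m : ℕ) (V : Finset ℕ) (T : Fin μ → Finset (Finset ℕ)) : Prop where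
  cardV : V.card = v
  volume : ∀ i, (T i).card = m
  blockSub : ∀ i, ∀ B ∈ T i, B ⊆ V
  blockCard : ∀ i, ∀ B ∈ T i, B.card = k
  disj : ∀ i j, i ≠ j → Disjoint (T i) (T j)
  balanced : ∀ S : Finset ℕ, S.card = t → ∀ i j,
    (blocksContaining (T i) S).card = (blocksContaining (T j) S).card

/-- A μ-way (v,k,t) Steiner trade: a trade in which every t-subset occurs
at most once in each collection. -/
def IsSteinerTrade (μ v k t m : ℕ) (V : Finset ℕ) (T : Fin μ → Finset (Finset ℕ)) : Prop :=
  IsTrade μ v k t m V T ∧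
  ∀ S : Finset ℕ, S.card = t → ∀ i, (blocksContaining (T i) S).card ≤ 1

/-- The foundation of a μ-way trade: the union of all its blocks. -/
def foundation {μ : ℕ} (T : Fin μ → Finset (Finset ℕ)) : Finset ℕ :=
  Finset.univ.biUnion (fun i => (T i).biUnion id)

/-- `T` is t-solely balanced: no two distinct collections contain a common
(t+1)-subset. -/
def SolelyBalanced {μ : ℕ} (t : ℕ) (T : Fin μ → Finset (Finset ℕ)) : Prop :=
  ∀ i j : Fin μ, i ≠ j → ∀ S : Finset ℕ, S.card = t + 1 →
    ¬ ((∃ B ∈ T i, S ⊆ B) ∧ (∃ B ∈ T j, S ⊆ B))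

namespace SB

def aa : Fin 3 → ℕ := fun i => i.val
def bb (m : ℕ) : Fin 3 → ℕ := fun i => if i.val = 2 then (if m = 4 then 1 else 4) else 2 * i.val

lemma nm {m p q : ℕ} (hm : 3 ≤ m) (hm4 : m ≠ 4) (h : p ≡ q [MOD m])
    (hd : ((q:ℤ) - p).natAbs = 1 ∨ ((q:ℤ) - p).natAbs = 2 ∨ ((q:ℤ) - p).natAbs = 4) : False := by
  have hdvd : m ∣ ((q:ℤ) - (p:ℤ)).natAbs := by
    rw [← Int.natAbs_natCast m]; exact Int.natAbs_dvd_natAbs.mpr h.dvd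
  rcases hd with hd | hd | hd <;> rw [hd] at hdvd
  · have := Nat.le_of_dvd one_pos hdvd; omega
  · have := Nat.le_of_dvd (by norm_num) hdvd; omega
  · have := Nat.le_of_dvd (by norm_num) hdvd
    have h3 : m = 3 := by omega
    subst h3; norm_num at hdvd

lemma aa_ne {m : ℕ} (hm : 3 ≤ m) {i j : Fin 3} (hij : i ≠ j) : ¬ aa i ≡ aa j [MOD m] := by
  intro h
  by_cases h4 : m = 4
  · subst h4; fin_cases i <;> fin_cases j <;> simp [aa] at h hij <;> exact absurd h (by decide)
  · fin_cases i <;> fin_cases j <;> simp [aa] at h hij <;>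
      exact nm hm h4 h (by norm_num)

lemma bb_ne {m : ℕ} (hm : 3 ≤ m) {i j : Fin 3} (hij : i ≠ j) : ¬ bb m i ≡ bb m j [MOD m] := by
  intro h
  by_cases h4 : m = 4
  · subst h4; fin_cases i <;> fin_cases j <;> simp [bb] at h hij <;> exact absurd h (by decide)
  · fin_cases i <;> fin_cases j <;> simp [bb, h4] at h hij <;>
      exact nm hm h4 h (by norm_num)

lemma cross_ne {m : ℕ} (hm : 3 ≤ m) {i j : Fin 3} (hij : i ≠ j) :
    ¬ aa i + bb m j ≡ aa j + bb m i [MOD m] := by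
  intro h
  by_cases h4 : m = 4
  · subst h4; fin_cases i <;> fin_cases j <;> simp [aa, bb] at h hij <;> exact absurd h (by decide)
  · fin_cases i <;> fin_cases j <;> simp [aa, bb, h4] at h hij <;>
      exact nm hm h4 h (by norm_num)

end SB

namespace SB

def blk (m : ℕ) (i : Fin 3) (x : ℕ) : Finset ℕ :=
  {x, m + (x + aa i) % m, 2*m + (x + bb m i) % m}

def TT (m : ℕ) : Fin 3 → Finset (Finset ℕ) := fun i => (Finset.range m).image (blk m i)

lemma mem_blk {m : ℕ} {i : Fin 3} {x u : ℕ} :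
    u ∈ blk m i x ↔ u = x ∨ u = m + (x + aa i) % m ∨ u = 2*m + (x + bb m i) % m := by
  simp [blk]

lemma mod_lt' {m : ℕ} (hm : 3 ≤ m) (c : ℕ) : c % m < m := Nat.mod_lt _ (by omega)

lemma blk_card {m : ℕ} (hm : 3 ≤ m) (i : Fin 3) {x : ℕ} (hx : x < m) :
    (blk m i x).card = 3 := by
  have h1 := mod_lt' hm (x + aa i)
  have h2 := mod_lt' hm (x + bb m i)
  rw [blk, Finset.card_insert_of_notMem (by simp; omega),
    Finset.card_insert_of_notMem (by simp; omega), Finset.card_singleton]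

lemma blk_subset {m : ℕ} (hm : 3 ≤ m) (i : Fin 3) {x : ℕ} (hx : x < m) :
    blk m i x ⊆ Finset.range (3*m) := by
  intro u hu
  have h1 := mod_lt' hm (x + aa i)
  have h2 := mod_lt' hm (x + bb m i)
  rw [mem_blk] at hu
  simp only [Finset.mem_range]
  omega

lemma mem_TT {m : ℕ} {i : Fin 3} {B : Finset ℕ} :
    B ∈ TT m i ↔ ∃ x, x < m ∧ B = blk m i x := by
  simp [TT, eq_comm]

/-- For each residue `r < m` and shift `c` there is a unique `x < m` with `(x+c) % m = r`. -/
lemma exists_unique_shift {m : ℕ} (hm : 3 ≤ m) (c r : ℕ) (hr : r < m) :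
    ∃! x, x < m ∧ (x + c) % m = r := by
  have hcm := mod_lt' hm c
  set x0 := (r + m - c % m) % m with hx0def
  have hx0 : x0 < m := mod_lt' hm _
  have hval : (x0 + c) % m = r := by
    have e1 : (x0 + c) % m = (x0 + c % m) % m := by
      rw [Nat.add_mod, Nat.mod_eq_of_lt hx0]
    rw [e1, hx0def, Nat.mod_add_mod, show r + m - c % m + c % m = r + m by omega,
      Nat.add_mod_right, Nat.mod_eq_of_lt hr]
  refine ⟨x0, ⟨hx0, hval⟩, ?_⟩
  rintro y ⟨hy, hyr⟩
  have h : y + c ≡ x0 + c [MOD m] := by unfold Nat.ModEq; rw [hyr, hval]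
  have h2 : y ≡ x0 [MOD m] := Nat.ModEq.add_right_cancel' c h
  unfold Nat.ModEq at h2
  rwa [Nat.mod_eq_of_lt hy, Nat.mod_eq_of_lt hx0] at h2


lemma slot0 {m : ℕ} {i : Fin 3} {x v : ℕ} (hm : 3 ≤ m) (hv : v ∈ blk m i x) (h : v < m) :
    v = x := by
  have h1 := mod_lt' hm (x + aa i)
  have h2 := mod_lt' hm (x + bb m i)
  rcases mem_blk.mp hv with h | h | h <;> omega

lemma slot1 {m : ℕ} {i : Fin 3} {x v : ℕ} (hm : 3 ≤ m) (hv : v ∈ blk m i x) (hxm : x < m)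
    (h : m ≤ v) (h' : v < 2*m) : v = m + (x + aa i) % m := by
  have h2 := mod_lt' hm (x + bb m i)
  rcases mem_blk.mp hv with h | h | h <;> omega

lemma slot2 {m : ℕ} {i : Fin 3} {x v : ℕ} (hm : 3 ≤ m) (hv : v ∈ blk m i x) (hxm : x < m)
    (h : 2*m ≤ v) : v = 2*m + (x + bb m i) % m := by
  have h1 := mod_lt' hm (x + aa i)
  rcases mem_blk.mp hv with h | h | h <;> omega

lemma exists_unique_blk {m : ℕ} (hm : 3 ≤ m) (i : Fin 3) {u : ℕ} (hu : u < 3*m) :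
    ∃! x, x < m ∧ u ∈ blk m i x := by
  rcases Nat.lt_or_ge u m with h | h
  · exact ⟨u, ⟨h, mem_blk.mpr (Or.inl rfl)⟩, fun y ⟨hy, hmem⟩ => (slot0 hm hmem h).symm⟩
  rcases Nat.lt_or_ge u (2*m) with h' | h'
  · obtain ⟨x, ⟨hx, hxv⟩, hun⟩ := exists_unique_shift hm (aa i) (u - m) (by omega)
    refine ⟨x, ⟨hx, mem_blk.mpr (Or.inr (Or.inl (by omega)))⟩, ?_⟩
    rintro y ⟨hy, hmem⟩
    have := slot1 hm hmem hy h h'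
    exact hun y ⟨hy, by omega⟩
  · obtain ⟨x, ⟨hx, hxv⟩, hun⟩ := exists_unique_shift hm (bb m i) (u - 2*m) (by omega)
    refine ⟨x, ⟨hx, mem_blk.mpr (Or.inr (Or.inr (by omega)))⟩, ?_⟩
    rintro y ⟨hy, hmem⟩
    have := slot2 hm hmem hy h'
    exact hun y ⟨hy, by omega⟩

lemma blocksContaining_TT {m : ℕ} (hm : 3 ≤ m) (i : Fin 3) (u : ℕ) :
    (blocksContaining (TT m i) {u}).card = if u < 3*m then 1 else 0 := by
  split
  case isTrue hu =>
    obtain ⟨x, ⟨hx, hmem⟩, hun⟩ := exists_unique_blk hm i hu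
    rw [Finset.card_eq_one]
    refine ⟨blk m i x, ?_⟩
    ext B
    simp only [blocksContaining, Finset.mem_filter, Finset.singleton_subset_iff,
      Finset.mem_singleton, mem_TT]
    constructor
    · rintro ⟨⟨y, hy, rfl⟩, huB⟩
      rw [hun y ⟨hy, huB⟩]
    · rintro rfl
      exact ⟨⟨x, hx, rfl⟩, hmem⟩
  case isFalse hu =>
    rw [Finset.card_eq_zero]
    ext B
    simp only [blocksContaining, Finset.mem_filter, Finset.singleton_subset_iff,
      Finset.notMem_empty, iff_false, not_and, mem_TT]
    rintro ⟨y, hy, rfl⟩ huB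
    have := blk_subset hm i hy huB
    simp only [Finset.mem_range] at this
    omega

lemma TT_card {m : ℕ} (hm : 3 ≤ m) (i : Fin 3) : (TT m i).card = m := by
  rw [TT, Finset.card_image_of_injOn, Finset.card_range]
  intro x hx y hy hxy
  simp only [Finset.coe_range, Set.mem_Iio] at hx hy
  have : x ∈ blk m i y := hxy ▸ mem_blk.mpr (Or.inl rfl)
  exact slot0 hm this hx

lemma cancel_mid {m : ℕ} (hm : 3 ≤ m) {i j : Fin 3} {x : ℕ}
    (h : (x + aa i) % m = (x + aa j) % m) : i = j := by
  by_contra hij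
  exact aa_ne hm hij (Nat.ModEq.add_left_cancel' x h)

lemma cancel_high {m : ℕ} (hm : 3 ≤ m) {i j : Fin 3} {x : ℕ}
    (h : (x + bb m i) % m = (x + bb m j) % m) : i = j := by
  by_contra hij
  exact bb_ne hm hij (Nat.ModEq.add_left_cancel' x h)

lemma cancel_cross {m : ℕ} (hm : 3 ≤ m) {i j : Fin 3} {x y : ℕ}
    (h1 : (x + aa i) % m = (y + aa j) % m)
    (h2 : (x + bb m i) % m = (y + bb m j) % m) : i = j := by
  by_contra hij
  have ha : x + aa i ≡ y + aa j [MOD m] := h1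
  have hb : y + bb m j ≡ x + bb m i [MOD m] := h2.symm
  have h3 := ha.add hb
  rw [show x + aa i + (y + bb m j) = (x + y) + (aa i + bb m j) by ring,
    show y + aa j + (x + bb m i) = (x + y) + (aa j + bb m i) by ring] at h3
  exact cross_ne hm hij (Nat.ModEq.add_left_cancel' (x + y) h3)

lemma TT_disjoint {m : ℕ} (hm : 3 ≤ m) {i j : Fin 3} (hij : i ≠ j) :
    Disjoint (TT m i) (TT m j) := by
  rw [Finset.disjoint_left]
  rintro B hBi hBj
  obtain ⟨x, hx, rfl⟩ := mem_TT.mp hBi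
  obtain ⟨y, hy, hBy⟩ := mem_TT.mp hBj
  have hxy : x = y := slot0 hm (hBy ▸ mem_blk.mpr (Or.inl rfl) : x ∈ blk m j y) hx
  subst hxy
  have h1 := mod_lt' hm (x + aa i)
  have hmem : m + (x + aa i) % m ∈ blk m j x :=
    hBy ▸ mem_blk.mpr (Or.inr (Or.inl rfl))
  have := slot1 hm hmem hx (by omega) (by omega)
  exact hij (cancel_mid hm (by omega : (x + aa i) % m = (x + aa j) % m))

lemma sb_core {m : ℕ} (hm : 3 ≤ m) {i j : Fin 3} (hij : i ≠ j) {x y u w : ℕ}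
    (hx : x < m) (hy : y < m) (huw : u < w)
    (hui : u ∈ blk m i x) (hwi : w ∈ blk m i x)
    (huj : u ∈ blk m j y) (hwj : w ∈ blk m j y) : False := by
  have hw3 : w < 3*m := by
    have := blk_subset hm i hx hwi; simpa [Finset.mem_range] using this
  rcases Nat.lt_or_ge u m with hu1 | hu1
  · -- u is the small element of both blocks, so x = y
    have hux : u = x := slot0 hm hui hu1
    have huy : u = y := slot0 hm huj hu1
    have hxyeq : x = y := by omega
    subst hxyeq
    rcases Nat.lt_or_ge w (2*m) with hw2 | hw2
    · have e1 := slot1 hm hwi hx (by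
        have hwx : w ≠ x := by omega
        rcases mem_blk.mp hwi with h | h | h <;> omega) hw2
      have e2 := slot1 hm hwj hx (by omega) hw2
      exact hij (cancel_mid (x := x) hm (by omega))
    · have e1 := slot2 hm hwi hx hw2
      have e2 := slot2 hm hwj hx hw2
      exact hij (cancel_high (x := x) hm (by omega))
  rcases Nat.lt_or_ge u (2*m) with hu2 | hu2
  · -- u is mid; w must be high
    have e1 := slot1 hm hui hx hu1 hu2
    have e2 := slot1 hm huj hy hu1 hu2
    rcases Nat.lt_or_ge w (2*m) with hw2 | hw2
    · have f1 := slot1 hm hwi hx (by omega) hw2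
      omega
    · have f1 := slot2 hm hwi hx hw2
      have f2 := slot2 hm hwj hy hw2
      exact hij (cancel_cross (x := x) (y := y) hm (by omega) (by omega))
  · -- u high, w > u high: both the high slot, contradiction
    have e1 := slot2 hm hui hx hu2
    have f1 := slot2 hm hwi hx (by omega)
    omega

end SB


open SB

/-- For every m ≥ 3 there exists a 3-way (v,3,1) Steiner trade of volume m
that is 1-solely balanced. -/
theorem solely_balanced_exists (m : ℕ) (hm : 3 ≤ m) :
    ∃ (v : ℕ) (V : Finset ℕ) (T : Fin 3 → Finset (Finset ℕ)),
      IsSteinerTrade 3 v 3 1 m V T ∧ SolelyBalanced 1 T := by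
  refine ⟨3*m, Finset.range (3*m), TT m, ⟨⟨Finset.card_range _, TT_card hm, ?_, ?_, ?_, ?_⟩, ?_⟩, ?_⟩
  · -- blockSub
    intro i B hB
    obtain ⟨x, hx, rfl⟩ := mem_TT.mp hB
    exact blk_subset hm i hx
  · -- blockCard
    intro i B hB
    obtain ⟨x, hx, rfl⟩ := mem_TT.mp hB
    exact blk_card hm i hx
  · -- disj
    exact fun i j hij => TT_disjoint hm hij
  · -- balanced
    intro S hS i j
    obtain ⟨u, rfl⟩ := Finset.card_eq_one.mp hS
    rw [blocksContaining_TT hm i, blocksContaining_TT hm j]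
  · -- Steiner
    intro S hS i
    obtain ⟨u, rfl⟩ := Finset.card_eq_one.mp hS
    rw [blocksContaining_TT hm i]
    split <;> omega
  · -- solely balanced
    rintro i j hij S hS ⟨⟨B, hBi, hSB⟩, ⟨B', hBj, hSB'⟩⟩
    obtain ⟨u, w, huw, rfl⟩ := Finset.card_eq_two.mp hS
    obtain ⟨x, hx, rfl⟩ := mem_TT.mp hBi
    obtain ⟨y, hy, rfl⟩ := mem_TT.mp hBj
    have hui : u ∈ blk m i x := hSB (by simp)
    have hwi : w ∈ blk m i x := hSB (by simp)
    have huj : u ∈ blk m j y := hSB' (by simp)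
    have hwj : w ∈ blk m j y := hSB' (by simp)
    rcases Ne.lt_or_gt huw with h | h
    · exact sb_core hm hij hx hy h hui hwi huj hwj
    · exact sb_core hm hij hx hy h hwi hui hwj huj
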